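/- Consider the group G presented with generators s_i and z_i for i ∈ ℕ, and relators: s_0; the commutators s_i z_i s_i^{-1} z_i^{-1}; the words (s_i^{-1} z_{i+1} s_i)(z_{i+1}^{-1} z_i)^{-1} (encoding s_i^{-1} z_{i+1} s_i = z_{i+1}^{-1} z_i); and the words s_{i+1}^{-1} s_i^2 z_i z_{i+1}^{-2} (encoding s_{i+1} = s_i^2 z_i z_{i+1}^{-2}), for all i ∈ ℕ. Then G is isomorphic to the additive group of dyadic rationals { p/2^k : p ∈ ℤ, k ∈ ℕ } ⊆ ℚ (viewed multiplicatively via Multiplicative); in particular G is abelian. -/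

import Mathlib

/-- The set of dyadic rationals p / 2^k. -/
def dyadicSet : Set ℚ := {x | ∃ (p : ℤ) (k : ℕ), x = (p : ℚ) / 2 ^ k}

/-- The generator s_i of the free group on the generators s_i, z_i (i ∈ ℕ). -/
def s (i : ℕ) : FreeGroup (ℕ ⊕ ℕ) := FreeGroup.of (Sum.inl i)

/-- The generator z_i of the free group on the generators s_i, z_i (i ∈ ℕ). -/
def z (i : ℕ) : FreeGroup (ℕ ⊕ ℕ) := FreeGroup.of (Sum.inr i)

/-- Relators for the unknotted embedding of the dyadic solenoid: s_0; [s_i, z_i];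
s_i⁻¹ z_{i+1} s_i = z_{i+1}⁻¹ z_i; and s_{i+1} = s_i² z_i z_{i+1}⁻². -/
def unknotRels : Set (FreeGroup (ℕ ⊕ ℕ)) :=
  {s 0} ∪
    {r | ∃ i : ℕ,
      r = s i * z i * (s i)⁻¹ * (z i)⁻¹ ∨
      r = ((s i)⁻¹ * z (i + 1) * s i) * ((z (i + 1))⁻¹ * z i)⁻¹ ∨
      r = (s (i + 1))⁻¹ * (s i) ^ 2 * z i * (z (i + 1)) ^ (-2 : ℤ)}

namespace UnknotAux

/-- `S i` is the image of `s i` in the presented group. -/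
def S (i : ℕ) : PresentedGroup unknotRels := PresentedGroup.mk unknotRels (s i)

/-- `Z i` is the image of `z i` in the presented group. -/
def Z (i : ℕ) : PresentedGroup unknotRels := PresentedGroup.mk unknotRels (z i)

lemma rel_one {r : FreeGroup (ℕ ⊕ ℕ)} (hr : r ∈ unknotRels) :
    PresentedGroup.mk unknotRels r = 1 :=
  (QuotientGroup.eq_one_iff r).2 (Subgroup.subset_normalClosure hr)

lemma hS0 : S 0 = 1 := rel_one (Or.inl rfl)

lemma hrel3 (i : ℕ) :
    ((S i)⁻¹ * Z (i + 1) * S i) * ((Z (i + 1))⁻¹ * Z i)⁻¹ = 1 := by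
  have := rel_one (Or.inr ⟨i, Or.inr (Or.inl rfl)⟩)
  simpa [S, Z, map_mul, map_inv] using this

lemma hrel4 (i : ℕ) :
    (S (i + 1))⁻¹ * (S i) ^ 2 * Z i * (Z (i + 1)) ^ (-2 : ℤ) = 1 := by
  have := rel_one (Or.inr ⟨i, Or.inr (Or.inr rfl)⟩)
  simpa [S, Z, map_mul, map_inv, map_pow, map_zpow] using this

lemma Zsq_of_S (i : ℕ) (hi : S i = 1) : Z i = (Z (i + 1)) ^ 2 := by
  have h := hrel3 i
  rw [hi] at h
  have h' : Z (i + 1) * (Z i)⁻¹ * Z (i + 1) = 1 := by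
    calc Z (i + 1) * (Z i)⁻¹ * Z (i + 1)
        = (1 : PresentedGroup unknotRels)⁻¹ * Z (i + 1) * 1 * ((Z (i + 1))⁻¹ * Z i)⁻¹ := by
          group
      _ = 1 := h
  calc Z i = Z (i + 1) * (Z (i + 1) * (Z i)⁻¹ * Z (i + 1))⁻¹ * Z (i + 1) := by group
    _ = Z (i + 1) * (1 : PresentedGroup unknotRels)⁻¹ * Z (i + 1) := by rw [h']
    _ = Z (i + 1) ^ 2 := by rw [inv_one, mul_one, pow_two]

lemma S_eq_one : ∀ i, S i = 1 := by
  intro i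
  induction i with
  | zero => exact hS0
  | succ n ih =>
    have hz : Z n = (Z (n + 1)) ^ 2 := Zsq_of_S n ih
    have h := hrel4 n
    rw [ih, hz] at h
    have : (S (n + 1))⁻¹ = 1 := by
      calc (S (n+1))⁻¹ = (S (n+1))⁻¹ * 1 ^ 2 * Z (n+1) ^ 2 * Z (n+1) ^ (-2 : ℤ) := by group
        _ = 1 := h
    simpa using congrArg (·⁻¹) this

lemma Z_sq (i : ℕ) : Z i = (Z (i + 1)) ^ 2 := Zsq_of_S i (S_eq_one i)

lemma Z_pow (k d : ℕ) : Z k = (Z (k + d)) ^ (2 ^ d : ℕ) := by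
  induction d with
  | zero => simp
  | succ n ih =>
    rw [ih, Z_sq (k + n), ← pow_mul, pow_succ]
    ring_nf

/-- Normal form: every element of the presented group is a power of some `Z k`. -/
lemma normal_form (g : PresentedGroup unknotRels) : ∃ (k : ℕ) (p : ℤ), g = (Z k) ^ p := by
  let T : Subgroup (PresentedGroup unknotRels) :=
    { carrier := {g | ∃ (k : ℕ) (p : ℤ), g = (Z k) ^ p}
      one_mem' := ⟨0, 0, by simp⟩
      mul_mem' := by
        rintro a b ⟨k, p, rfl⟩ ⟨j, q, rfl⟩
        refine ⟨max k j, p * 2 ^ (max k j - k) + q * 2 ^ (max k j - j), ?_⟩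
        have hk : Z k = (Z (max k j)) ^ (2 ^ (max k j - k) : ℕ) := by
          have := Z_pow k (max k j - k)
          rwa [Nat.add_sub_cancel' (le_max_left k j)] at this
        have hj : Z j = (Z (max k j)) ^ (2 ^ (max k j - j) : ℕ) := by
          have := Z_pow j (max k j - j)
          rwa [Nat.add_sub_cancel' (le_max_right k j)] at this
        rw [hk, hj, ← zpow_natCast, ← zpow_natCast (Z (max k j)), ← zpow_mul, ← zpow_mul,
          ← zpow_add]
        congr 1
        push_cast
        ring
      inv_mem' := by
        rintro a ⟨k, p, rfl⟩
        exact ⟨k, -p, by rw [zpow_neg]⟩ }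
  exact PresentedGroup.generated_by unknotRels T
    (fun j => by
      rcases j with i | i
      · exact ⟨0, 0, by rw [zpow_zero]; exact S_eq_one i⟩
      · exact ⟨i, 1, by simp [Z, z, PresentedGroup.of]⟩) g

end UnknotAux

/-- The group presented by the relations of the unknotted dyadic solenoid complement is
isomorphic to the additive group of dyadic rationals (viewed multiplicatively); in
particular it is abelian. -/
theorem presentedGroup_unknot_dyadic (H : AddSubgroup ℚ) (hH : (H : Set ℚ) = dyadicSet) :
    Nonempty (PresentedGroup unknotRels ≃* Multiplicative H) ∧
    ∀ a b : PresentedGroup unknotRels, a * b = b * a := by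
  have hmem : ∀ i : ℕ, (1 : ℚ) / 2 ^ i ∈ H := fun i => by
    rw [← SetLike.mem_coe, hH]
    exact ⟨1, i, by norm_num⟩
  set d : ℕ → H := fun i => ⟨(1 : ℚ) / 2 ^ i, hmem i⟩ with hd_def
  have hd : ∀ i : ℕ, d (i + 1) + d (i + 1) = d i := fun i => by
    apply Subtype.ext
    push_cast [hd_def]
    rw [pow_succ]
    ring
  set f : ℕ ⊕ ℕ → Multiplicative H :=
    Sum.elim (fun _ => 1) (fun i => Multiplicative.ofAdd (d i)) with hf_def
  have hsq : ∀ i : ℕ, (Multiplicative.ofAdd (d (i + 1))) ^ 2 = Multiplicative.ofAdd (d i) :=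
    fun i => by rw [pow_two, ← ofAdd_add, hd]
  have hfs : ∀ i : ℕ, FreeGroup.lift f (s i) = 1 := fun i => by
    simp [s, hf_def]
  have hfz : ∀ i : ℕ, FreeGroup.lift f (z i) = Multiplicative.ofAdd (d i) := fun i => by
    simp [z, hf_def]
  have hf : ∀ r ∈ unknotRels, FreeGroup.lift f r = 1 := by
    rintro r (rfl | ⟨i, rfl | rfl | rfl⟩)
    · exact hfs 0
    · simp [map_mul, map_inv, hfs, hfz]
    · set A := Multiplicative.ofAdd (d (i + 1)) with hA
      set B := Multiplicative.ofAdd (d i) with hB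
      rw [map_mul, map_inv, map_mul, map_mul, map_inv, map_mul, map_inv, hfs, hfz, hfz, ← hA, ← hB]
      calc (1 : Multiplicative H)⁻¹ * A * 1 * (A⁻¹ * B)⁻¹
          = A * (B⁻¹ * A) := by group
        _ = A * (A * B⁻¹) := by rw [mul_comm B⁻¹ A]
        _ = A ^ 2 * B⁻¹ := by rw [pow_two, mul_assoc]
        _ = B * B⁻¹ := by rw [hsq i]
        _ = 1 := by group
    · set A := Multiplicative.ofAdd (d (i + 1)) with hA
      set B := Multiplicative.ofAdd (d i) with hB
      rw [map_mul, map_mul, map_mul, map_inv, map_pow, map_zpow, hfs, hfs, hfz, hfz, ← hA, ← hB]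
      calc (1 : Multiplicative H)⁻¹ * 1 ^ 2 * B * A ^ (-2 : ℤ)
          = B * (A ^ 2)⁻¹ := by group
        _ = 1 := by rw [hsq i, ← hB]; group
  set φ := PresentedGroup.toGroup hf with hφ_def
  have hφZ : ∀ k : ℕ, φ (UnknotAux.Z k) = Multiplicative.ofAdd (d k) := fun k => by
    have : UnknotAux.Z k = PresentedGroup.of (Sum.inr k) := rfl
    rw [this, hφ_def, PresentedGroup.toGroup.of]
    simp [hf_def]
  have inj : Function.Injective φ := by
    rw [injective_iff_map_eq_one]
    intro a ha
    obtain ⟨k, p, rfl⟩ := UnknotAux.normal_form a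
    rw [map_zpow, hφZ] at ha
    have h0 : p • d k = 0 := by
      have := congrArg Multiplicative.toAdd ha
      simpa [toAdd_zpow] using this
    have hq : (p : ℚ) * ((1 : ℚ) / 2 ^ k) = 0 := by
      have := congrArg (fun x : H => (x : ℚ)) h0
      simpa [hd_def] using this
    have hp : p = 0 := by
      have h2 : ((2 : ℚ) ^ k) ≠ 0 := by positivity
      field_simp at hq
      exact_mod_cast hq
    simp [hp]
  have surj : Function.Surjective φ := by
    intro y
    have hy : ((Multiplicative.toAdd y : H) : ℚ) ∈ dyadicSet := by
      rw [← hH]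
      exact (Multiplicative.toAdd y).2
    obtain ⟨p, k, hpk⟩ := hy
    refine ⟨UnknotAux.Z k ^ p, ?_⟩
    rw [map_zpow, hφZ]
    have : p • d k = Multiplicative.toAdd y := by
      apply Subtype.ext
      push_cast [hd_def, zsmul_eq_mul]
      rw [hpk]
      ring
    rw [← ofAdd_zsmul, this]
    exact ofAdd_toAdd y
  refine ⟨⟨MulEquiv.ofBijective φ ⟨inj, surj⟩⟩, fun a b => ?_⟩
  apply inj
  rw [map_mul, map_mul, mul_comm]
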